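/- Stability of the cone Laplace transform under perturbation of the frequency: let 𝔠 ⊂ ℝ^n be an open cone, δ₀ > 0, ζ ∈ ℂ^n with |Re ζ| = |Im ζ| = 1 and Re ζ · x ≤ −δ₀|x| for all x ∈ 𝔠, P a homogeneous polynomial of degree N, and ρ(τ) = τ Re ζ + i√(τ² + k²) Im ζ for τ, k > 0. Then |∫_𝔠 e^{ζ·x} P(x) dx − ∫_𝔠 e^{(ρ(τ)/τ)·x} P(x) dx| ≤ (N+n)! δ₀^{−N−n−1} (k/τ) ‖P‖, where ‖P‖ = ∫_{S^{n-1}} |P(θ)| dσ(θ). -/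

import Mathlib

open MeasureTheory Metric Real
open scoped RealInnerProductSpace BigOperators

noncomputable section

/-- Euclidean space ℝⁿ. -/
abbrev Euc (n : ℕ) := EuclideanSpace ℝ (Fin n)

/-- Partial derivative in the `i`-th coordinate direction. -/
def coordDeriv (n : ℕ) (i : Fin n) (f : Euc n → ℂ) : Euc n → ℂ :=
  fun x => fderiv ℝ f x (EuclideanSpace.single i (1 : ℝ))

/-- Multi-index partial derivative `∂^γ`. -/
def multiDeriv (n : ℕ) (γ : Fin n → ℕ) (f : Euc n → ℂ) : Euc n → ℂ :=
  (List.finRange n).foldr (fun i g => (coordDeriv n i)^[γ i] g) f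

/-- The Laplacian `Δf = ∑ ∂²f/∂xᵢ²`. -/
def lap (n : ℕ) (f : Euc n → ℂ) : Euc n → ℂ :=
  fun x => ∑ i : Fin n, coordDeriv n i (coordDeriv n i f) x

/-- The surface measure on the unit sphere `S^{n-1} ⊂ ℝⁿ`. -/
def sphMeasure (n : ℕ) : Measure (sphere (0 : Euc n) 1) :=
  (volume : Measure (Euc n)).toSphere

/-- The Herglotz wave with wavenumber `k` and kernel `g`. -/
def herglotz (n : ℕ) (k : ℝ) (g : sphere (0 : Euc n) 1 → ℂ) : Euc n → ℂ :=
  fun x => ∫ θ, Complex.exp (Complex.I * k * (⟪(θ : Euc n), x⟫ : ℂ)) * g θ ∂(sphMeasure n)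

/-- The `L²(S^{n-1})` norm of a kernel. -/
def l2S (n : ℕ) (g : sphere (0 : Euc n) 1 → ℂ) : ℝ :=
  Real.sqrt (∫ θ, ‖g θ‖ ^ 2 ∂(sphMeasure n))

/-- The `L¹(S^{n-1})` norm of (the restriction to the sphere of) a function. -/
def normS (n : ℕ) (P : Euc n → ℂ) : ℝ :=
  ∫ θ, ‖P (θ : Euc n)‖ ∂(sphMeasure n)

/-- The `L²(Ω)` norm of a function on a subset `Ω ⊂ ℝⁿ`. -/
def l2O (n : ℕ) (Ω : Set (Euc n)) (f : Euc n → ℂ) : ℝ :=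
  Real.sqrt (∫ x in Ω, ‖f x‖ ^ 2)

/-- The finite set of multi-indices of total degree `N`. -/
def degSet (n N : ℕ) : Finset (Fin n → ℕ) :=
  (Fintype.piFinset fun _ => Finset.range (N + 1)).filter fun γ => ∑ i, γ i = N

/-- The degree-`N` homogeneous Taylor polynomial of `u` at `x_c`, evaluated at `x`. -/
def taylorHom (n N : ℕ) (u : Euc n → ℂ) (xc : Euc n) : Euc n → ℂ :=
  fun x => ∑ γ ∈ degSet n N,
    (multiDeriv n γ u xc / (∏ i, Nat.factorial (γ i) : ℕ)) * ∏ i, ((x i : ℂ)) ^ γ i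

/-- A function is homogeneous of degree `N`. -/
def IsHomog (n N : ℕ) (P : Euc n → ℂ) : Prop :=
  ∀ t : ℝ, 0 < t → ∀ x : Euc n, P (t • x) = (t : ℂ) ^ N * P x

/-- An open cone with vertex at the origin. -/
def IsOpenCone (n : ℕ) (C : Set (Euc n)) : Prop :=
  IsOpen C ∧ ∀ t : ℝ, 0 < t → ∀ x ∈ C, t • x ∈ C

end

open Set
open scoped ENNReal

noncomputable section Aux

lemma norm_expI_sub (s t : ℝ) :
    ‖Complex.exp (Complex.I * s) - Complex.exp (Complex.I * t)‖ ≤ |s - t| := by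
  have key : ∀ u : ℝ, HasDerivAt (fun v : ℝ => Complex.exp (Complex.I * v))
      (Complex.exp (Complex.I * u) * Complex.I) u := by
    intro u
    have h1 : HasDerivAt (fun z : ℂ => Complex.exp (Complex.I * z))
        (Complex.exp (Complex.I * (u : ℂ)) * Complex.I) (u : ℂ) := by
      simpa using ((hasDerivAt_id (u : ℂ)).const_mul Complex.I).cexp
    exact h1.comp_ofReal
  have h2 := Convex.norm_image_sub_le_of_norm_hasDerivWithin_le
    (f := fun v : ℝ => Complex.exp (Complex.I * v))
    (f' := fun u => Complex.exp (Complex.I * u) * Complex.I) (C := 1)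
    (fun u _ => (key u).hasDerivWithinAt)
    (fun u _ => by simp [Complex.norm_exp]) convex_univ
    (Set.mem_univ t) (Set.mem_univ s)
  simpa using h2

lemma intOn_pow_exp {δ : ℝ} (hδ : 0 < δ) (M : ℕ) :
    IntegrableOn (fun r : ℝ => r ^ M * Real.exp (-(δ * r))) (Ioi 0) := by
  have h := integrableOn_rpow_mul_exp_neg_mul_rpow (s := (M : ℝ)) (p := 1)
    (lt_of_lt_of_le neg_one_lt_zero (Nat.cast_nonneg M)) zero_lt_one hδ
  refine h.congr_fun (fun x hx => ?_) measurableSet_Ioi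
  beta_reduce; rw [Real.rpow_natCast, Real.rpow_one, neg_mul]

lemma int_pow_exp_eval {δ : ℝ} (hδ : 0 < δ) (M : ℕ) :
    ∫ r in Ioi (0 : ℝ), r ^ M * Real.exp (-(δ * r)) = (M.factorial : ℝ) / δ ^ (M + 1) := by
  have h := Real.integral_rpow_mul_exp_neg_mul_Ioi (a := (M : ℝ) + 1) (r := δ)
    (by positivity) hδ
  rw [show (M : ℝ) + 1 - 1 = (M : ℝ) by ring] at h
  calc ∫ r in Ioi (0 : ℝ), r ^ M * Real.exp (-(δ * r))
      = ∫ r in Ioi (0 : ℝ), r ^ ((M : ℝ)) * Real.exp (-(δ * r)) :=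
        (setIntegral_congr_fun measurableSet_Ioi fun t _ => by
          rw [Real.rpow_natCast]).symm
    _ = (1 / δ) ^ ((M : ℝ) + 1) * Real.Gamma ((M : ℝ) + 1) := h
    _ = (M.factorial : ℝ) / δ ^ (M + 1) := by
        rw [Real.Gamma_nat_eq_factorial,
          show ((M : ℝ) + 1) = ((M + 1 : ℕ) : ℝ) by push_cast; ring,
          Real.rpow_natCast, one_div, inv_pow]
        field_simp

lemma polar_key (n : ℕ) (hn : 2 ≤ n) (N j : ℕ) {δ : ℝ} (hδ : 0 < δ)
    (P : Euc n → ℂ) (hP : IsHomog n N P) (hPc : Continuous P) :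
    ∫⁻ x : Euc n, ENNReal.ofReal (Real.exp (-(δ * ‖x‖)) * (‖x‖ ^ j * ‖P x‖)) =
      (∫⁻ θ : sphere (0 : Euc n) 1, ENNReal.ofReal ‖P (θ : Euc n)‖
          ∂(volume : Measure (Euc n)).toSphere) *
        ENNReal.ofReal (∫ r in Set.Ioi (0 : ℝ), r ^ (N + j + (n - 1)) * Real.exp (-(δ * r))) := by
  haveI : Nontrivial (Euc n) :=
    Module.nontrivial_of_finrank_pos (R := ℝ)
      (by rw [finrank_euclideanSpace_fin]; omega)
  set f : Euc n → ℝ≥0∞ :=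
    fun x => ENNReal.ofReal (Real.exp (-(δ * ‖x‖)) * (‖x‖ ^ j * ‖P x‖)) with hf
  set g : sphere (0 : Euc n) 1 × Ioi (0 : ℝ) → ℝ≥0∞ :=
    fun p => ENNReal.ofReal ‖P (p.1 : Euc n)‖ *
      ENNReal.ofReal ((p.2 : ℝ) ^ (N + j) * Real.exp (-(δ * (p.2 : ℝ)))) with hg
  have hcomp : ∀ x : ({0}ᶜ : Set (Euc n)), g (homeomorphUnitSphereProd (Euc n) x) = f x := by
    rintro ⟨x, hx⟩
    have hx0 : x ≠ 0 := hx
    have hnx : (0 : ℝ) < ‖x‖ := norm_pos_iff.2 hx0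
    have hPnx : P ((‖x‖)⁻¹ • x) = ((‖x‖⁻¹ : ℝ) : ℂ) ^ N * P x := hP _ (by positivity) x
    simp only [hg, hf, homeomorphUnitSphereProd_apply_fst_coe,
      homeomorphUnitSphereProd_apply_snd_coe, hPnx]
    rw [← ENNReal.ofReal_mul (by positivity)]
    congr 1
    rw [norm_mul, norm_pow, Complex.norm_real, Real.norm_eq_abs,
      abs_of_pos (by positivity : (0:ℝ) < ‖x‖⁻¹)]
    field_simp
    rw [one_div, inv_pow, pow_add, mul_comm (‖x‖ ^ N)⁻¹, mul_assoc, ← mul_assoc (‖x‖ ^ N)⁻¹, inv_mul_cancel₀ (by positivity), one_mul]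
  have hfm : Measurable f := by
    apply ENNReal.measurable_ofReal.comp
    fun_prop
  calc ∫⁻ x : Euc n, f x
      = ∫⁻ x : ({0}ᶜ : Set (Euc n)), f x ∂((volume : Measure (Euc n)).comap (↑)) := by
        rw [lintegral_subtype_comap (measurableSet_singleton (0 : Euc n)).compl,
          MeasureTheory.restrict_compl_singleton]
    _ = ∫⁻ x : ({0}ᶜ : Set (Euc n)), g (homeomorphUnitSphereProd (Euc n) x)
          ∂((volume : Measure (Euc n)).comap (↑)) := by
        exact (lintegral_congr hcomp).symm
    _ = ∫⁻ p, g p ∂((volume : Measure (Euc n)).toSphere.prod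
          (Measure.volumeIoiPow (Module.finrank ℝ (Euc n) - 1))) :=
        (Measure.measurePreserving_homeomorphUnitSphereProd
          (volume : Measure (Euc n))).lintegral_comp_emb
          (Homeomorph.measurableEmbedding _) g
    _ = (∫⁻ θ : sphere (0 : Euc n) 1, ENNReal.ofReal ‖P (θ : Euc n)‖
          ∂(volume : Measure (Euc n)).toSphere) *
        ∫⁻ r : Ioi (0 : ℝ), ENNReal.ofReal ((r : ℝ) ^ (N + j) * Real.exp (-(δ * (r : ℝ))))
          ∂(Measure.volumeIoiPow (n - 1)) := by
        rw [finrank_euclideanSpace_fin]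
        exact lintegral_prod_mul
          (by apply ENNReal.measurable_ofReal.comp; fun_prop : Measurable fun θ :
            sphere (0 : Euc n) 1 => ENNReal.ofReal ‖P (θ : Euc n)‖).aemeasurable
          (by apply ENNReal.measurable_ofReal.comp (f := fun r : Ioi (0:ℝ) =>
              ((r : ℝ) ^ (N + j) * Real.exp (-(δ * (r : ℝ))))); fun_prop :
            Measurable fun r : Ioi (0:ℝ) =>
              ENNReal.ofReal ((r : ℝ) ^ (N + j) * Real.exp (-(δ * (r : ℝ))))).aemeasurable
    _ = (∫⁻ θ : sphere (0 : Euc n) 1, ENNReal.ofReal ‖P (θ : Euc n)‖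
          ∂(volume : Measure (Euc n)).toSphere) *
        ENNReal.ofReal (∫ r in Set.Ioi (0 : ℝ), r ^ (N + j + (n - 1)) * Real.exp (-(δ * r))) := by
        congr 1
        calc ∫⁻ r : Ioi (0 : ℝ), ENNReal.ofReal ((r : ℝ) ^ (N + j) * Real.exp (-(δ * (r : ℝ))))
              ∂(Measure.volumeIoiPow (n - 1))
            = ∫⁻ r : Ioi (0 : ℝ),
                (fun u : ℝ => ENNReal.ofReal (u ^ (n - 1)) *
                  ENNReal.ofReal (u ^ (N + j) * Real.exp (-(δ * u)))) (r : ℝ)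
                ∂(Measure.comap Subtype.val volume) := by
              rw [Measure.volumeIoiPow,
                lintegral_withDensity_eq_lintegral_mul _
                  (by fun_prop :
                    Measurable fun r : Ioi (0:ℝ) => ENNReal.ofReal ((r : ℝ) ^ (n - 1)))
                  (by apply ENNReal.measurable_ofReal.comp (f := fun r : Ioi (0:ℝ) =>
                      ((r : ℝ) ^ (N + j) * Real.exp (-(δ * (r : ℝ))))); fun_prop)]
              rfl
          _ = ∫⁻ r in Ioi (0 : ℝ), ENNReal.ofReal (r ^ (n - 1)) *
                ENNReal.ofReal (r ^ (N + j) * Real.exp (-(δ * r))) ∂volume :=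
            by exact lintegral_subtype_comap measurableSet_Ioi
                (fun u : ℝ => ENNReal.ofReal (u ^ (n - 1)) *
                  ENNReal.ofReal (u ^ (N + j) * Real.exp (-(δ * u))))
          _ = ∫⁻ r in Ioi (0 : ℝ),
                ENNReal.ofReal (r ^ (N + j + (n - 1)) * Real.exp (-(δ * r))) ∂volume := by
              refine setLIntegral_congr_fun measurableSet_Ioi (fun r hr => ?_)
              have hr0 : (0:ℝ) < r := hr
              rw [← ENNReal.ofReal_mul (by positivity)]
              congr 1
              rw [pow_add]
              ring
          _ = ENNReal.ofReal (∫ r in Set.Ioi (0 : ℝ), r ^ (N + j + (n - 1)) *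
                Real.exp (-(δ * r))) := by
              rw [← ofReal_integral_eq_lintegral_ofReal (intOn_pow_exp hδ (N + j + (n - 1)))
                (by filter_upwards [ae_restrict_mem measurableSet_Ioi] with r hr
                    exact mul_nonneg (pow_nonneg (le_of_lt hr) _) (Real.exp_pos _).le)]

end Aux

theorem stmt10_cone_laplace_stability
    (n N : ℕ) (hn : 2 ≤ n) (C : Set (Euc n)) (hC : IsOpenCone n C)
    (δ k τ : ℝ) (hδ : 0 < δ) (hk : 0 < k) (hτ : 0 < τ)
    (a b : Euc n) (ha : ‖a‖ = 1) (hb : ‖b‖ = 1)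
    (haC : ∀ x ∈ C, ⟪a, x⟫ ≤ -δ * ‖x‖)
    (P : Euc n → ℂ) (hP : IsHomog n N P) (hPc : Continuous P) :
    ‖(∫ x in C, Complex.exp ((⟪a, x⟫ : ℂ) + Complex.I * (⟪b, x⟫ : ℂ)) * P x) -
        ∫ x in C, Complex.exp ((⟪a, x⟫ : ℂ) +
          Complex.I * (Real.sqrt (τ ^ 2 + k ^ 2) / τ : ℝ) * (⟪b, x⟫ : ℂ)) * P x‖ ≤
      (Nat.factorial (N + n) : ℝ) * δ ^ (-((N : ℤ) + n + 1)) * (k / τ) * normS n P := by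
  haveI : Nontrivial (Euc n) :=
    Module.nontrivial_of_finrank_pos (R := ℝ)
      (by rw [finrank_euclideanSpace_fin]; omega)
  have hCm : MeasurableSet C := hC.1.measurableSet
  -- facts about the perturbed frequency
  have hsqpos : (0:ℝ) < Real.sqrt (τ ^ 2 + k ^ 2) := Real.sqrt_pos.2 (by positivity)
  have hsqle : Real.sqrt (τ ^ 2 + k ^ 2) ≤ τ + k := by
    rw [show τ + k = Real.sqrt ((τ + k) ^ 2) by rw [Real.sqrt_sq (by positivity)]]
    exact Real.sqrt_le_sqrt (by nlinarith)
  have hsqge : τ ≤ Real.sqrt (τ ^ 2 + k ^ 2) := by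
    have h := Real.sq_sqrt (show (0:ℝ) ≤ τ ^ 2 + k ^ 2 by positivity)
    nlinarith [hsqpos]
  have hβ1 : 1 ≤ Real.sqrt (τ ^ 2 + k ^ 2) / τ := by
    rw [le_div_iff₀ hτ, one_mul]; exact hsqge
  have hβ2 : Real.sqrt (τ ^ 2 + k ^ 2) / τ - 1 ≤ k / τ := by
    rw [div_sub_one hτ.ne', div_le_div_iff₀ hτ hτ]
    nlinarith
  -- the two integrands
  set f₁ : Euc n → ℂ :=
    fun x => Complex.exp ((⟪a, x⟫ : ℂ) + Complex.I * (⟪b, x⟫ : ℂ)) * P x with hf₁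
  set f₂ : Euc n → ℂ :=
    fun x => Complex.exp ((⟪a, x⟫ : ℂ) +
      Complex.I * (Real.sqrt (τ ^ 2 + k ^ 2) / τ : ℝ) * (⟪b, x⟫ : ℂ)) * P x with hf₂
  -- norms of the exponentials
  have hnorm1 : ∀ x : Euc n, ‖Complex.exp ((⟪a, x⟫ : ℂ) + Complex.I * (⟪b, x⟫ : ℂ))‖
      = Real.exp ⟪a, x⟫ := fun x => by
    simp [Complex.norm_exp]
  have hnorm2 : ∀ x : Euc n, ‖Complex.exp ((⟪a, x⟫ : ℂ) +
      Complex.I * (Real.sqrt (τ ^ 2 + k ^ 2) / τ : ℝ) * (⟪b, x⟫ : ℂ))‖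
      = Real.exp ⟪a, x⟫ := fun x => by
    simp [Complex.norm_exp]
  have hexpC : ∀ x ∈ C, Real.exp ⟪a, x⟫ ≤ Real.exp (-(δ * ‖x‖)) := fun x hx => by
    have := haC x hx
    exact Real.exp_le_exp.2 (by linarith [neg_mul δ ‖x‖])
  have hinner : ∀ x : Euc n, |⟪b, x⟫| ≤ ‖x‖ := fun x => by
    have := abs_real_inner_le_norm b x
    rwa [hb, one_mul] at this
  -- pointwise bound for the difference
  have hpt : ∀ x ∈ C, ‖f₁ x - f₂ x‖ ≤
      (k / τ) * (Real.exp (-(δ * ‖x‖)) * (‖x‖ ^ 1 * ‖P x‖)) := by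
    intro x hx
    have key1 : Complex.exp ((⟪a, x⟫ : ℂ) + Complex.I * (⟪b, x⟫ : ℂ)) =
        Complex.exp ((⟪a, x⟫ : ℝ) : ℂ) * Complex.exp (Complex.I * ((⟪b, x⟫ : ℝ) : ℂ)) := by
      rw [← Complex.exp_add]
    have key2 : Complex.exp ((⟪a, x⟫ : ℂ) +
        Complex.I * (Real.sqrt (τ ^ 2 + k ^ 2) / τ : ℝ) * (⟪b, x⟫ : ℂ)) =
        Complex.exp ((⟪a, x⟫ : ℝ) : ℂ) *
          Complex.exp (Complex.I * ((Real.sqrt (τ ^ 2 + k ^ 2) / τ * ⟪b, x⟫ : ℝ) : ℂ)) := by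
      rw [← Complex.exp_add]
      congr 1
      push_cast
      ring
    have hsplit : f₁ x - f₂ x = Complex.exp ((⟪a, x⟫ : ℝ) : ℂ) *
        ((Complex.exp (Complex.I * ((⟪b, x⟫ : ℝ) : ℂ)) -
          Complex.exp (Complex.I * ((Real.sqrt (τ ^ 2 + k ^ 2) / τ * ⟪b, x⟫ : ℝ) : ℂ))) * P x) := by
      rw [hf₁, hf₂]
      simp only []
      rw [key1, key2]
      ring
    have hmid : ‖Complex.exp (Complex.I * ((⟪b, x⟫ : ℝ) : ℂ)) -
        Complex.exp (Complex.I * ((Real.sqrt (τ ^ 2 + k ^ 2) / τ * ⟪b, x⟫ : ℝ) : ℂ))‖ ≤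
        (k / τ) * ‖x‖ := by
      refine le_trans (norm_expI_sub _ _) ?_
      calc |⟪b, x⟫ - Real.sqrt (τ ^ 2 + k ^ 2) / τ * ⟪b, x⟫|
          = (Real.sqrt (τ ^ 2 + k ^ 2) / τ - 1) * |⟪b, x⟫| := by
            rw [show ⟪b, x⟫ - Real.sqrt (τ ^ 2 + k ^ 2) / τ * ⟪b, x⟫ =
              -((Real.sqrt (τ ^ 2 + k ^ 2) / τ - 1) * ⟪b, x⟫) by ring, abs_neg, abs_mul,
              abs_of_nonneg (by linarith : (0:ℝ) ≤ Real.sqrt (τ ^ 2 + k ^ 2) / τ - 1)]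
        _ ≤ (k / τ) * ‖x‖ :=
            mul_le_mul hβ2 (hinner x) (abs_nonneg _) (by positivity)
    calc ‖f₁ x - f₂ x‖
        = Real.exp ⟪a, x⟫ * (‖Complex.exp (Complex.I * ((⟪b, x⟫ : ℝ) : ℂ)) -
            Complex.exp (Complex.I * ((Real.sqrt (τ ^ 2 + k ^ 2) / τ * ⟪b, x⟫ : ℝ) : ℂ))‖ *
            ‖P x‖) := by
          rw [hsplit, norm_mul, norm_mul]
          congr 1
          simp [Complex.norm_exp]
      _ ≤ Real.exp (-(δ * ‖x‖)) * (((k / τ) * ‖x‖) * ‖P x‖) := by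
          refine mul_le_mul (hexpC x hx) ?_ (by positivity) (Real.exp_nonneg _)
          exact mul_le_mul_of_nonneg_right hmid (norm_nonneg _)
      _ = (k / τ) * (Real.exp (-(δ * ‖x‖)) * (‖x‖ ^ 1 * ‖P x‖)) := by ring
  -- bounds on C for each integrand separately
  have hb₁ : ∀ x ∈ C, ‖f₁ x‖ ≤ Real.exp (-(δ * ‖x‖)) * (‖x‖ ^ 0 * ‖P x‖) := fun x hx => by
    rw [hf₁]; simp only []
    rw [norm_mul, hnorm1 x, pow_zero, one_mul]
    exact mul_le_mul_of_nonneg_right (hexpC x hx) (norm_nonneg _)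
  have hb₂ : ∀ x ∈ C, ‖f₂ x‖ ≤ Real.exp (-(δ * ‖x‖)) * (‖x‖ ^ 0 * ‖P x‖) := fun x hx => by
    rw [hf₂]; simp only []
    rw [norm_mul, hnorm2 x, pow_zero, one_mul]
    exact mul_le_mul_of_nonneg_right (hexpC x hx) (norm_nonneg _)
  -- sphere integral
  have hSphInt : Integrable (fun θ : sphere (0 : Euc n) 1 => ‖P (θ : Euc n)‖)
      ((volume : Measure (Euc n)).toSphere) := by
    obtain ⟨Mp, hMp⟩ := (isCompact_sphere (0 : Euc n) 1).exists_bound_of_continuousOn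
      hPc.continuousOn
    refine (integrable_const Mp).mono'
      ((hPc.comp continuous_subtype_val).norm.aestronglyMeasurable) (ae_of_all _ fun θ => ?_)
    simpa using hMp θ θ.2
  have hL : ∫⁻ θ : sphere (0 : Euc n) 1, ENNReal.ofReal ‖P (θ : Euc n)‖
      ∂((volume : Measure (Euc n)).toSphere) = ENNReal.ofReal (normS n P) := by
    rw [show normS n P = ∫ θ : sphere (0 : Euc n) 1, ‖P (θ : Euc n)‖
      ∂((volume : Measure (Euc n)).toSphere) from rfl]
    exact (ofReal_integral_eq_lintegral_ofReal hSphInt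
      (ae_of_all _ fun θ => norm_nonneg _)).symm
  have hnormS0 : 0 ≤ normS n P := by
    rw [show normS n P = ∫ θ : sphere (0 : Euc n) 1, ‖P (θ : Euc n)‖
      ∂((volume : Measure (Euc n)).toSphere) from rfl]
    exact integral_nonneg fun θ => norm_nonneg _
  -- finiteness of the dominating integrals
  have hfin : ∀ j : ℕ, ∫⁻ x : Euc n,
      ENNReal.ofReal (Real.exp (-(δ * ‖x‖)) * (‖x‖ ^ j * ‖P x‖)) < ⊤ := fun j => by
    rw [polar_key n hn N j hδ P hP hPc, hL]
    exact ENNReal.mul_lt_top ENNReal.ofReal_lt_top ENNReal.ofReal_lt_top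
  -- integrability of both integrands on C
  have hmono : ∀ (f : Euc n → ℂ), Continuous f →
      (∀ x ∈ C, ‖f x‖ ≤ Real.exp (-(δ * ‖x‖)) * (‖x‖ ^ 0 * ‖P x‖)) →
      IntegrableOn f C volume := by
    intro f hf hbd
    refine ⟨hf.aestronglyMeasurable.restrict, ?_⟩
    rw [hasFiniteIntegral_iff_norm]
    calc ∫⁻ x in C, ENNReal.ofReal ‖f x‖
        ≤ ∫⁻ x in C, ENNReal.ofReal (Real.exp (-(δ * ‖x‖)) * (‖x‖ ^ 0 * ‖P x‖)) :=
          setLIntegral_mono (by apply ENNReal.measurable_ofReal.comp; fun_prop)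
            fun x hx => ENNReal.ofReal_le_ofReal (hbd x hx)
      _ ≤ ∫⁻ x, ENNReal.ofReal (Real.exp (-(δ * ‖x‖)) * (‖x‖ ^ 0 * ‖P x‖)) :=
          setLIntegral_le_lintegral _ _
      _ < ⊤ := hfin 0
  have hcont₁ : Continuous f₁ := by
    rw [hf₁]
    apply Continuous.mul _ hPc
    apply Complex.continuous_exp.comp
    apply Continuous.add
    · exact Complex.continuous_ofReal.comp (continuous_const.inner continuous_id)
    · exact continuous_const.mul (Complex.continuous_ofReal.comp
        (continuous_const.inner continuous_id))
  have hcont₂ : Continuous f₂ := by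
    rw [hf₂]
    apply Continuous.mul _ hPc
    apply Complex.continuous_exp.comp
    apply Continuous.add
    · exact Complex.continuous_ofReal.comp (continuous_const.inner continuous_id)
    · exact continuous_const.mul (Complex.continuous_ofReal.comp
        (continuous_const.inner continuous_id))
  have hInt₁ : IntegrableOn f₁ C volume := hmono f₁ hcont₁ hb₁
  have hInt₂ : IntegrableOn f₂ C volume := hmono f₂ hcont₂ hb₂
  -- the exponent arithmetic
  have hexp1 : N + 1 + (n - 1) = N + n := by omega
  have hIval : ∫ r in Set.Ioi (0 : ℝ), r ^ (N + n) * Real.exp (-(δ * r))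
      = ((N + n).factorial : ℝ) / δ ^ (N + n + 1) := int_pow_exp_eval hδ (N + n)
  have hpolar := polar_key n hn N 1 hδ P hP hPc
  rw [hexp1, hIval] at hpolar
  -- RHS nonnegativity
  have hRHS0 : 0 ≤ (Nat.factorial (N + n) : ℝ) * δ ^ (-((N : ℤ) + n + 1)) * (k / τ) * normS n P := by
    have : (0:ℝ) ≤ δ ^ (-((N : ℤ) + n + 1)) := zpow_nonneg hδ.le _
    positivity
  -- main estimate
  rw [← integral_sub hInt₁ hInt₂]
  refine le_trans (norm_integral_le_lintegral_norm _) ?_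
  refine ENNReal.toReal_le_of_le_ofReal hRHS0 ?_
  have hdiv0 : (0:ℝ) ≤ k / τ := (div_pos hk hτ).le
  calc ∫⁻ x in C, ENNReal.ofReal ‖f₁ x - f₂ x‖
      ≤ ∫⁻ x in C, ENNReal.ofReal ((k / τ) *
          (Real.exp (-(δ * ‖x‖)) * (‖x‖ ^ 1 * ‖P x‖))) :=
        setLIntegral_mono (by apply ENNReal.measurable_ofReal.comp; fun_prop)
          fun x hx => ENNReal.ofReal_le_ofReal (hpt x hx)
    _ ≤ ∫⁻ x, ENNReal.ofReal ((k / τ) *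
          (Real.exp (-(δ * ‖x‖)) * (‖x‖ ^ 1 * ‖P x‖))) :=
        setLIntegral_le_lintegral _ _
    _ = ENNReal.ofReal (k / τ) * ∫⁻ x : Euc n,
          ENNReal.ofReal (Real.exp (-(δ * ‖x‖)) * (‖x‖ ^ 1 * ‖P x‖)) := by
        simp_rw [ENNReal.ofReal_mul hdiv0]
        exact lintegral_const_mul' _ _ ENNReal.ofReal_ne_top
    _ = ENNReal.ofReal (k / τ) * (ENNReal.ofReal (normS n P) *
          ENNReal.ofReal (((N + n).factorial : ℝ) / δ ^ (N + n + 1))) := by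
        rw [hpolar, hL]
    _ = ENNReal.ofReal ((Nat.factorial (N + n) : ℝ) * δ ^ (-((N : ℤ) + n + 1)) * (k / τ) *
          normS n P) := by
        rw [← ENNReal.ofReal_mul (by positivity), ← ENNReal.ofReal_mul hdiv0]
        congr 1
        have hz : δ ^ (-((N : ℤ) + n + 1)) = (δ ^ (N + n + 1 : ℕ))⁻¹ := by
          rw [show -((N : ℤ) + n + 1) = -((N + n + 1 : ℕ) : ℤ) by push_cast; ring,
            zpow_neg, zpow_natCast]
        rw [hz, div_eq_mul_inv]
        ring
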